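/- Let β > 1 and let λ ∈ ℂ satisfy 1/β < |λ| < 1 and Σ_{n=1}^∞ a_n(β,1)/(βλ)^n = 1 (i.e. λ is a non-leading eigenvalue of the Perron–Frobenius operator of τ_β). Then the function F_λ : [0,1] → ℂ, F_λ(x) = Σ_{n=1}^∞ a_n(β,x)/(βλ)^n, is Lipschitz at no point of [0,1]: for every x₀ ∈ [0,1], there do not exist C > 0 and δ > 0 with |F_λ(x) − F_λ(x₀)| ≤ C|x − x₀| for all x ∈ [0,1] with |x − x₀| < δ. Consequently F_λ is differentiable (within [0,1]) at no point of [0,1]. -/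

import Mathlib

open scoped BigOperators

/-- The beta-map `x ↦ βx - ⌊βx⌋`. -/
noncomputable def tau (β x : ℝ) : ℝ := β * x - ⌊β * x⌋

/-- Greedy digit `a_n(β,x) = ⌊β·τ_β^{n-1}(x)⌋` (meaningful for `n ≥ 1`). -/
noncomputable def dig (β x : ℝ) (n : ℕ) : ℤ := ⌊β * (tau β)^[n - 1] x⌋

/-- `x` is a simple point for `β`: some `τ_β^{n-1}(x)` lies in `{1/β, …, ⌊β⌋/β}`. -/
def IsSimplePt (β x : ℝ) : Prop :=
  ∃ n : ℕ, 1 ≤ n ∧ ∃ k : ℕ, 1 ≤ k ∧ (k : ℤ) ≤ ⌊β⌋ ∧ (tau β)^[n - 1] x = (k : ℝ) / β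

/-- `L(x)`: the least `n ≥ 1` with `τ_β^{n-1}(x) ∈ {1/β, …, ⌊β⌋/β}`. -/
noncomputable def Lpt (β x : ℝ) : ℕ :=
  sInf {n : ℕ | 1 ≤ n ∧ ∃ k : ℕ, 1 ≤ k ∧ (k : ℤ) ≤ ⌊β⌋ ∧ (tau β)^[n - 1] x = (k : ℝ) / β}

/-- `β` is simple if `x = 1` is a simple point for `β`. -/
def IsSimpleBeta (β : ℝ) : Prop := IsSimplePt β 1

open Classical in
/-- Quasi-greedy digit `d_n(β,1)` (meaningful for `n ≥ 1`): if `β` is simple with `L = L(1)`,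
the periodic sequence repeating the block `(a_1, …, a_{L-1}, a_L - 1)`; otherwise `a_n(β,1)`. -/
noncomputable def qdig (β : ℝ) (n : ℕ) : ℤ :=
  if IsSimpleBeta β then
    (if (n - 1) % Lpt β 1 = Lpt β 1 - 1 then dig β 1 (Lpt β 1) - 1
     else dig β 1 ((n - 1) % Lpt β 1 + 1))
  else dig β 1 n

/-- `φ_β(z) = Σ_{n≥1} a_n(β,1) β^{-n} z^n`. -/
noncomputable def phi (β : ℝ) (z : ℂ) : ℂ :=
  ∑' n : ℕ, (dig β 1 (n + 1) : ℂ) * (z / (β : ℂ)) ^ (n + 1)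

/-- `φ̂_β(z) = Σ_{n≥1} d_n(β,1) β^{-n} z^n`. -/
noncomputable def phiHat (β : ℝ) (z : ℂ) : ℂ :=
  ∑' n : ℕ, (qdig β (n + 1) : ℂ) * (z / (β : ℂ)) ^ (n + 1)

/-- `ψ_β(z) = 1 + Σ_{n≥1} τ_β^n(1) β^{-n} z^n`. -/
noncomputable def psi (β : ℝ) (z : ℂ) : ℂ :=
  1 + ∑' n : ℕ, (((tau β)^[n + 1] 1 : ℝ) : ℂ) * (z / (β : ℂ)) ^ (n + 1)

/-- `F_λ(x) = Σ_{n≥1} a_n(β,x)/(βλ)^n`. -/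
noncomputable def Ffun (β : ℝ) (lam : ℂ) (x : ℝ) : ℂ :=
  ∑' n : ℕ, (dig β x (n + 1) : ℂ) / ((β : ℂ) * lam) ^ (n + 1)

lemma tau_eq_fract (β x : ℝ) : tau β x = Int.fract (β * x) := rfl

lemma tau_nonneg (β x : ℝ) : 0 ≤ tau β x := Int.fract_nonneg _
lemma tau_lt_one (β x : ℝ) : tau β x < 1 := Int.fract_lt_one _

lemma iter_mem {x : ℝ} (β : ℝ) (hx : x ∈ Set.Icc (0:ℝ) 1) (n : ℕ) :
    (tau β)^[n] x ∈ Set.Icc (0:ℝ) 1 := by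
  cases n with
  | zero => simpa using hx
  | succ n =>
    rw [Function.iterate_succ_apply']
    exact ⟨tau_nonneg _ _, (tau_lt_one _ _).le⟩

lemma dig_nonneg {β x : ℝ} (hβ : 0 ≤ β) (hx : x ∈ Set.Icc (0:ℝ) 1) (n : ℕ) :
    0 ≤ dig β x n :=
  Int.floor_nonneg.2 (mul_nonneg hβ (iter_mem β hx _).1)

lemma dig_le {β x : ℝ} (hβ : 0 ≤ β) (hx : x ∈ Set.Icc (0:ℝ) 1) (n : ℕ) :
    (dig β x n : ℝ) ≤ β := by
  refine le_trans (Int.floor_le _) ?_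
  nlinarith [(iter_mem β hx (n-1)).2, (iter_mem β hx (n-1)).1]

lemma dig_abs_le {β x : ℝ} (hβ : 0 ≤ β) (hx : x ∈ Set.Icc (0:ℝ) 1) (n : ℕ) :
    |(dig β x n : ℝ)| ≤ β := by
  rw [abs_of_nonneg (by exact_mod_cast dig_nonneg hβ hx n)]
  exact dig_le hβ hx n

lemma dig_shift (β x : ℝ) (m n : ℕ) :
    dig β ((tau β)^[n] x) (m + 1) = dig β x (m + n + 1) := by
  unfold dig
  simp [Nat.add_sub_cancel, ← Function.iterate_add_apply, Nat.add_comm]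

lemma floor_sub_eq {s e : ℝ} (h0 : 0 ≤ e) (h1 : e ≤ Int.fract s) : ⌊s - e⌋ = ⌊s⌋ := by
  rw [Int.fract] at h1
  rw [Int.floor_eq_iff]
  refine ⟨by linarith, ?_⟩
  push_cast
  have := Int.lt_floor_add_one s
  linarith

lemma floor_add_eq {s e : ℝ} (h0 : 0 ≤ e) (h1 : Int.fract s + e < 1) : ⌊s + e⌋ = ⌊s⌋ := by
  rw [Int.fract] at h1
  rw [Int.floor_eq_iff]
  have := Int.floor_le s
  refine ⟨by linarith, by push_cast; linarith⟩

lemma tau_sub {β z e : ℝ} (h0 : 0 ≤ β * e) (h1 : β * e ≤ Int.fract (β * z)) :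
    tau β (z - e) = tau β z - β * e := by
  have h2 : ⌊β * (z - e)⌋ = ⌊β * z⌋ := by
    rw [show β * (z - e) = β * z - β * e by ring]
    exact floor_sub_eq h0 h1
  simp only [tau]
  rw [h2]
  ring

lemma tau_add {β z e : ℝ} (h0 : 0 ≤ β * e) (h1 : Int.fract (β * z) + β * e < 1) :
    tau β (z + e) = tau β z + β * e := by
  have h2 : ⌊β * (z + e)⌋ = ⌊β * z⌋ := by
    rw [show β * (z + e) = β * z + β * e by ring]
    exact floor_add_eq h0 h1
  simp only [tau]
  rw [h2]
  ring

lemma fract_iter {β : ℝ} (x : ℝ) (k : ℕ) :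
    Int.fract (β * (tau β)^[k] x) = (tau β)^[k+1] x := by
  rw [Function.iterate_succ_apply']
  rfl

lemma tau_zero (β : ℝ) : tau β 0 = 0 := by simp [tau]

lemma iter_zero (β : ℝ) (n : ℕ) : (tau β)^[n] 0 = 0 := by
  induction n with
  | zero => rfl
  | succ n ih => rw [Function.iterate_succ_apply', ih, tau_zero]

lemma F_zero (β : ℝ) (lam : ℂ) : Ffun β lam 0 = 0 := by
  have h : ∀ n : ℕ, (dig β (0:ℝ) (n+1) : ℂ) / ((β : ℂ) * lam) ^ (n + 1) = 0 := by
    intro n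
    have : dig β (0:ℝ) (n+1) = 0 := by
      unfold dig; rw [iter_zero]; simp
    rw [this]; simp
  rw [Ffun, tsum_congr h, tsum_zero]

lemma iter_nonneg {β : ℝ} {y : ℝ} (hy : 0 ≤ y) (m : ℕ) : 0 ≤ (tau β)^[m] y := by
  cases m with
  | zero => exact hy
  | succ m => rw [Function.iterate_succ_apply']; exact tau_nonneg _ _

lemma tau_iter_le {β : ℝ} (hβ : 0 < β) {y : ℝ} (hy : 0 ≤ y) (m : ℕ) :
    (tau β)^[m] y ≤ β ^ m * y := by
  induction m with
  | zero => simp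
  | succ m ih =>
    rw [Function.iterate_succ_apply']
    set z := (tau β)^[m] y with hz
    have h1 : 0 ≤ z := iter_nonneg hy m
    have h2 : tau β z ≤ β * z := by
      have h3 : (0:ℝ) ≤ ⌊β * z⌋ := by
        exact_mod_cast Int.floor_nonneg.2 (mul_nonneg hβ.le h1)
      simp only [tau]
      linarith
    calc tau β z ≤ β * z := h2
      _ ≤ β * (β ^ m * y) := by nlinarith
      _ = β ^ (m+1) * y := by ring

lemma leftPert_iter {β : ℝ} (hβ : 1 < β) {x₀ t : ℝ} (hx₀ : 0 ≤ x₀) (n : ℕ)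
    (ht0 : 0 ≤ t) (ht : t ≤ (tau β)^[n] x₀) :
    ∀ k, k ≤ n → (tau β)^[k] (x₀ - t / β ^ n) = (tau β)^[k] x₀ - t * β ^ k / β ^ n := by
  have hβ0 : (0:ℝ) < β := by linarith
  have key : ∀ k, k ≤ n → t * β ^ k / β ^ n ≤ (tau β)^[k] x₀ := by
    intro k hk
    have hdecomp : (tau β)^[n] x₀ = (tau β)^[n - k] ((tau β)^[k] x₀) := by
      rw [← Function.iterate_add_apply]
      congr 1
      omega
    have hpos : 0 ≤ (tau β)^[k] x₀ := iter_nonneg hx₀ k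
    have hle := tau_iter_le hβ0 hpos (n - k)
    rw [← hdecomp] at hle
    have h2 : t ≤ β ^ (n - k) * (tau β)^[k] x₀ := le_trans ht hle
    rw [div_le_iff₀ (by positivity)]
    have hpow : β ^ (n - k) * β ^ k = β ^ n := by
      rw [← pow_add]; congr 1; omega
    nlinarith [pow_pos hβ0 k, pow_pos hβ0 (n-k)]
  intro k hk
  induction k with
  | zero => simp
  | succ k ih =>
    have hk' : k ≤ n := by omega
    have hik := ih hk'
    rw [Function.iterate_succ_apply', hik, Function.iterate_succ_apply']
    have he : β * (t * β ^ k / β ^ n) = t * β ^ (k+1) / β ^ n := by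
      field_simp; ring
    rw [tau_sub (by rw [he]; positivity) (by rw [he, fract_iter]; exact key (k+1) hk), he]

lemma F_summable {β : ℝ} {lam : ℂ} (hβ : 0 ≤ β) (hb : 1 < ‖(β : ℂ) * lam‖)
    {x : ℝ} (hx : x ∈ Set.Icc (0:ℝ) 1) :
    Summable (fun n : ℕ => (dig β x (n + 1) : ℂ) / ((β : ℂ) * lam) ^ (n + 1)) := by
  set b := (β : ℂ) * lam with hbdef
  have hrpos : (0:ℝ) < ‖b‖ := lt_trans one_pos hb
  have hlt : 1 / ‖b‖ < 1 := by
    rw [div_lt_one hrpos]; exact hb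
  have hg : Summable (fun n : ℕ => β * (1 / ‖b‖) ^ (n + 1)) := by
    have := (summable_geometric_of_lt_one (by positivity) hlt).mul_left (β * (1 / ‖b‖))
    refine this.congr (fun n => ?_)
    ring
  refine Summable.of_norm_bounded hg (fun n => ?_)
  rw [norm_div, norm_pow, div_pow, one_pow]
  have hd : ‖((dig β x (n+1) : ℤ) : ℂ)‖ = |(dig β x (n+1) : ℝ)| := by
    rw [show ((dig β x (n+1) : ℤ) : ℂ) = ((dig β x (n+1) : ℝ) : ℂ) by push_cast; ring,
      Complex.norm_real, Real.norm_eq_abs]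
  rw [hd, mul_one_div]
  apply div_le_div_of_nonneg_right ?_ (by positivity)
  · exact dig_abs_le hβ hx _

lemma F_step {β : ℝ} {lam : ℂ} (hβ : 0 ≤ β) (hb : 1 < ‖(β : ℂ) * lam‖)
    {x : ℝ} (hx : x ∈ Set.Icc (0:ℝ) 1) :
    Ffun β lam x = ((dig β x 1 : ℂ) + Ffun β lam (tau β x)) / ((β : ℂ) * lam) := by
  set b := (β : ℂ) * lam with hbdef
  have hb0 : b ≠ 0 := by
    intro h; rw [h] at hb; simp at hb; linarith
  have hs := F_summable hβ hb hx
  rw [Ffun, hs.tsum_eq_zero_add]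
  have h1 : ∀ n : ℕ, (dig β x (n + 1 + 1) : ℂ) / b ^ (n + 1 + 1)
      = (↑b)⁻¹ * ((dig β (tau β x) (n + 1) : ℂ) / b ^ (n + 1)) := by
    intro n
    have h2 : dig β (tau β x) (n + 1) = dig β x (n + 1 + 1) := by
      have := dig_shift β x n 1
      simpa [Nat.add_comm] using this
    rw [h2, pow_succ, div_mul_eq_div_div, div_eq_inv_mul]
  rw [tsum_congr h1, tsum_mul_left]
  rw [Ffun, ← hbdef]
  field_simp
  ring

lemma F_nstep {β : ℝ} {lam : ℂ} (hβ : 0 ≤ β) (hb : 1 < ‖(β : ℂ) * lam‖)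
    {x : ℝ} (hx : x ∈ Set.Icc (0:ℝ) 1) (n : ℕ) :
    Ffun β lam x = (∑ k ∈ Finset.range n, (dig β x (k + 1) : ℂ) / ((β : ℂ) * lam) ^ (k + 1))
      + (((β : ℂ) * lam) ^ n)⁻¹ * Ffun β lam ((tau β)^[n] x) := by
  set b := (β : ℂ) * lam with hbdef
  induction n with
  | zero => simp
  | succ n ih =>
    rw [ih]
    have hstep := F_step hβ hb (iter_mem β hx n)
    rw [Function.iterate_succ_apply', hstep, ← hbdef]
    have hb0 : b ≠ 0 := by
      intro h; rw [h] at hb; simp at hb; linarith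
    have hd : dig β ((tau β)^[n] x) 1 = dig β x (n + 1) := by
      have := dig_shift β x 0 n
      simpa using this
    rw [Finset.sum_range_succ, hd]
    have hit : tau β ((tau β)^[n] x) = (tau β)^[n+1] x := by
      rw [Function.iterate_succ_apply']
    rw [hit]
    field_simp
    ring

lemma dig_eq_of_iter {β x x' : ℝ} {m : ℕ}
    (h1 : (tau β)^[m] x = (tau β)^[m] x' - e)
    (h2 : (tau β)^[m+1] x = (tau β)^[m+1] x' - β * e) :
    dig β x (m+1) = dig β x' (m+1) := by
  have hx : ((dig β x (m+1) : ℤ) : ℝ) = β * (tau β)^[m] x - (tau β)^[m+1] x := by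
    unfold dig
    simp only [Nat.add_sub_cancel]
    have := fract_iter (β := β) x m
    rw [Int.fract] at this
    linarith
  have hx' : ((dig β x' (m+1) : ℤ) : ℝ) = β * (tau β)^[m] x' - (tau β)^[m+1] x' := by
    unfold dig
    simp only [Nat.add_sub_cancel]
    have := fract_iter (β := β) x' m
    rw [Int.fract] at this
    linarith
  have : ((dig β x (m+1) : ℤ) : ℝ) = ((dig β x' (m+1) : ℤ) : ℝ) := by
    rw [hx, hx', h1, h2]; ring
  exact_mod_cast this

lemma leftPert_dig {β : ℝ} (hβ : 1 < β) {x₀ t : ℝ} (hx₀ : 0 ≤ x₀) (n : ℕ)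
    (ht0 : 0 ≤ t) (ht : t ≤ (tau β)^[n] x₀) :
    ∀ k, k < n → dig β (x₀ - t / β ^ n) (k + 1) = dig β x₀ (k + 1) := by
  intro k hk
  refine dig_eq_of_iter (leftPert_iter hβ hx₀ n ht0 ht k hk.le)
    ?_
  rw [leftPert_iter hβ hx₀ n ht0 ht (k+1) hk]
  congr 1
  field_simp
  ring

lemma rightPert_iter {β : ℝ} (hβ : 1 < β) {x₀ η : ℝ} (hη : 0 ≤ η) (n : ℕ)
    (hc : ∀ m, 1 ≤ m → m ≤ n → (tau β)^[m] x₀ + β ^ m * η < 1) :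
    ∀ k, k ≤ n → (tau β)^[k] (x₀ + η) = (tau β)^[k] x₀ + β ^ k * η := by
  have hβ0 : (0:ℝ) < β := by linarith
  intro k hk
  induction k with
  | zero => simp
  | succ k ih =>
    have hik := ih (by omega)
    rw [Function.iterate_succ_apply', hik, Function.iterate_succ_apply']
    have he : β * (β ^ k * η) = β ^ (k+1) * η := by ring
    rw [tau_add (by positivity) ?_, he]
    rw [he, fract_iter]
    exact hc (k+1) (by omega) hk

lemma rightPert_dig {β : ℝ} (hβ : 1 < β) {x₀ η : ℝ} (hη : 0 ≤ η) (n : ℕ)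
    (hc : ∀ m, 1 ≤ m → m ≤ n → (tau β)^[m] x₀ + β ^ m * η < 1) :
    ∀ k, k < n → dig β (x₀ + η) (k + 1) = dig β x₀ (k + 1) := by
  intro k hk
  refine dig_eq_of_iter (e := -(β ^ k * η)) ?_ ?_
  · rw [rightPert_iter hβ hη n hc k hk.le]; ring
  · rw [rightPert_iter hβ hη n hc (k+1) hk]; ring

lemma F_diff {β : ℝ} {lam : ℂ} (hβ : 0 ≤ β) (hb : 1 < ‖(β : ℂ) * lam‖)
    {x x' : ℝ} (hx : x ∈ Set.Icc (0:ℝ) 1) (hx' : x' ∈ Set.Icc (0:ℝ) 1) (n : ℕ)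
    (hdig : ∀ k, k < n → dig β x (k + 1) = dig β x' (k + 1)) :
    Ffun β lam x - Ffun β lam x' = (((β : ℂ) * lam) ^ n)⁻¹
      * (Ffun β lam ((tau β)^[n] x) - Ffun β lam ((tau β)^[n] x')) := by
  rw [F_nstep hβ hb hx n, F_nstep hβ hb hx' n]
  have : ∀ k ∈ Finset.range n, (dig β x (k + 1) : ℂ) / ((β : ℂ) * lam) ^ (k + 1)
      = (dig β x' (k + 1) : ℂ) / ((β : ℂ) * lam) ^ (k + 1) := by
    intro k hk
    rw [hdig k (Finset.mem_range.1 hk)]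
  rw [Finset.sum_congr rfl this]
  ring

lemma F_one_div (β : ℝ) (lam : ℂ) (hβ : 1 < β) (hb : 1 < ‖(β : ℂ) * lam‖) :
    Ffun β lam (1 / β) = (((β : ℂ) * lam))⁻¹ := by
  have hβ0 : (0:ℝ) < β := by linarith
  have hx : (1/β : ℝ) ∈ Set.Icc (0:ℝ) 1 := by
    exact ⟨by positivity, by rw [div_le_one hβ0]; linarith⟩
  have hd : dig β (1/β) 1 = 1 := by
    unfold dig
    simp only [Nat.sub_self, Function.iterate_zero, id]
    rw [mul_one_div, div_self (by linarith)]
    simp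
  have htau : tau β (1/β) = 0 := by
    simp only [tau]
    rw [mul_one_div, div_self (by linarith)]
    simp
  rw [F_step hβ0.le hb hx, hd, htau, F_zero]
  simp

lemma F_pow (β : ℝ) (lam : ℂ) (hβ : 1 < β) (hb : 1 < ‖(β : ℂ) * lam‖) (j : ℕ) (hj : 1 ≤ j) :
    Ffun β lam ((1 / β) ^ j) = ((((β : ℂ) * lam)) ^ j)⁻¹ := by
  have hβ0 : (0:ℝ) < β := by linarith
  induction j with
  | zero => omega
  | succ j ih =>
    rcases Nat.eq_zero_or_pos j with h | h
    · subst h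
      simpa [pow_one] using F_one_div β lam hβ hb
    · have hij := ih h
      have hmem : ((1/β : ℝ) ^ (j+1)) ∈ Set.Icc (0:ℝ) 1 := by
        constructor
        · positivity
        · apply pow_le_one₀ (by positivity)
          rw [div_le_one hβ0]; linarith
      have hlt : (0:ℝ) < (1/β)^j ∧ ((1/β : ℝ))^j < 1 := by
        constructor
        · positivity
        · apply pow_lt_one₀ (by positivity) ?_ (by omega)
          rw [div_lt_one hβ0]; exact hβ
      have hkey : β * (1/β : ℝ)^(j+1) = (1/β)^j := by
        field_simp
        rw [pow_succ, mul_comm, mul_assoc, one_div_mul_cancel hβ0.ne', mul_one]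
      have hd : dig β ((1/β)^(j+1)) 1 = 0 := by
        unfold dig
        simp only [Nat.sub_self, Function.iterate_zero, id]
        rw [hkey]
        exact Int.floor_eq_zero_iff.2 ⟨hlt.1.le, hlt.2⟩
      have htau : tau β ((1/β)^(j+1)) = (1/β)^j := by
        simp only [tau]
        rw [hkey]
        rw [Int.floor_eq_zero_iff.2 ⟨hlt.1.le, hlt.2⟩]
        simp
      rw [F_step hβ0.le hb hmem, hd, htau, hij]
      have hb0 : ((β : ℂ) * lam) ≠ 0 := by
        intro h; rw [h] at hb; simp at hb; linarith
      have hβc : (β:ℂ) ≠ 0 := left_ne_zero_of_mul hb0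
      have hlc : lam ≠ 0 := right_ne_zero_of_mul hb0
      field_simp
      ring

lemma F_frac (β : ℝ) (lam : ℂ) (hβ : 1 < β) (hb : 1 < ‖(β : ℂ) * lam‖)
    (a : ℤ) (ha1 : 1 ≤ a) (ha2 : (a:ℝ) ≤ β) :
    Ffun β lam ((a : ℝ) / β) = (a : ℂ) / ((β : ℂ) * lam) := by
  have hβ0 : (0:ℝ) < β := by linarith
  have ha0 : (0:ℝ) < (a:ℝ) := by exact_mod_cast lt_of_lt_of_le zero_lt_one (by exact_mod_cast ha1)
  have hx : ((a:ℝ)/β) ∈ Set.Icc (0:ℝ) 1 := by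
    constructor
    · positivity
    · rw [div_le_one hβ0]; exact ha2
  have hkey : β * ((a:ℝ)/β) = (a:ℝ) := by field_simp
  have hd : dig β ((a:ℝ)/β) 1 = a := by
    unfold dig
    simp only [Nat.sub_self, Function.iterate_zero, id]
    rw [hkey]
    exact Int.floor_intCast a
  have htau : tau β ((a:ℝ)/β) = 0 := by
    simp only [tau]
    rw [hkey, Int.floor_intCast]
    ring
  rw [F_step hβ0.le hb hx, hd, htau, F_zero]
  simp

lemma key_arith {β r C κ : ℝ} (hβ : 0 < β) (hr : 0 < r) {m : ℕ}
    (h : κ * (r ^ m)⁻¹ ≤ C * (β ^ m)⁻¹) : κ * (β / r) ^ m ≤ C := by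
  have hβm : (0:ℝ) < β ^ m := pow_pos hβ m
  have hrm : (0:ℝ) < r ^ m := pow_pos hr m
  rw [← div_eq_mul_inv, ← div_eq_mul_inv] at h
  rw [div_le_div_iff₀ hrm hβm] at h
  rw [div_pow, mul_div_assoc', div_le_iff₀ hrm]
  exact h
lemma no_big {ρ C κ : ℝ} (hρ : 1 < ρ) (hκ : 0 < κ)
    (h : ∀ N : ℕ, ∃ m, N ≤ m ∧ κ * ρ ^ m ≤ C) : False := by
  obtain ⟨m₀, hm₀⟩ := pow_unbounded_of_one_lt (C / κ) hρ
  obtain ⟨m, hm, hle⟩ := h m₀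
  have h1 : ρ ^ m₀ ≤ ρ ^ m := pow_le_pow_right₀ (by linarith) hm
  have h2 : C / κ < ρ ^ m := lt_of_lt_of_le hm₀ h1
  rw [div_lt_iff₀ hκ] at h2
  nlinarith

lemma caseA {β : ℝ} {lam : ℂ} (hβ : 1 < β) (hb : 1 < ‖(β:ℂ)*lam‖) (hlt : ‖(β:ℂ)*lam‖ < β)
    (F1 : Ffun β lam 1 = 1)
    {x₀ : ℝ} (hx₀ : x₀ ∈ Set.Icc (0:ℝ) 1) (hA : ∀ n, (tau β)^[n] x₀ ≠ 0)
    {C δ : ℝ} (hC : 0 < C) (hδ : 0 < δ)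
    (HL : ∀ x ∈ Set.Icc (0:ℝ) 1, |x - x₀| < δ →
      ‖Ffun β lam x - Ffun β lam x₀‖ ≤ C * |x - x₀|) : False := by
  set b := (β:ℂ) * lam with hbdef
  set r := ‖b‖ with hrdef
  have hβ0 : (0:ℝ) < β := by linarith
  have hr0 : (0:ℝ) < r := by rw [hrdef]; linarith
  have hβinv : (1/β : ℝ) < 1 := by rw [div_lt_one hβ0]; exact hβ
  have hβinv0 : (0:ℝ) < 1/β := by positivity
  have hρ : 1 < β / r := by rw [lt_div_iff₀ hr0]; linarith
  set κ := ‖(1 : ℂ) - b⁻¹‖ with hκdef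
  have hκ : 0 < κ := by
    rw [hκdef, norm_pos_iff]
    intro h
    have h1 : (b : ℂ)⁻¹ = 1 := (sub_eq_zero.1 h).symm
    have h2 : ‖(b:ℂ)⁻¹‖ = 1 := by rw [h1]; exact norm_one
    rw [norm_inv] at h2
    have h3 : ‖b‖ = 1 := by rwa [inv_eq_one] at h2
    rw [← hrdef] at h3
    linarith
  have hFp : ∀ m : ℕ, Ffun β lam ((1/β)^m) = (b ^ m)⁻¹ := by
    intro m
    cases m with
    | zero => simpa using F1
    | succ m => exact F_pow β lam hβ hb (m+1) (by omega)
  refine no_big hρ (show (0:ℝ) < κ/2 by positivity) (C := C * β) (fun N => ?_)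
  obtain ⟨n₁, hn₁⟩ := exists_pow_lt_of_lt_one hδ hβinv
  set n := max N n₁ with hndef
  have hδn : (1/β : ℝ)^n < δ :=
    lt_of_le_of_lt (pow_le_pow_of_le_one (le_of_lt hβinv0) (le_of_lt hβinv) (le_max_right _ _)) hn₁
  set y₀ := (tau β)^[n] x₀ with hy₀def
  have hy₀mem := iter_mem β hx₀ n
  have hy₀pos : 0 < y₀ := lt_of_le_of_ne hy₀mem.1 (Ne.symm (hA n))
  have hy₀le : y₀ ≤ 1 := hy₀mem.2
  have hex : ∃ j : ℕ, (1/β : ℝ)^j ≤ y₀ := by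
    obtain ⟨j, hj⟩ := exists_pow_lt_of_lt_one hy₀pos hβinv
    exact ⟨j, hj.le⟩
  set j := Nat.find hex with hjdef
  have hj : (1/β : ℝ)^j ≤ y₀ := Nat.find_spec hex
  have hy₀β : y₀ ≤ β * (1/β)^j := by
    rcases Nat.eq_zero_or_pos j with h | h
    · rw [h]
      simp only [pow_zero, mul_one]
      linarith
    · have hmin := Nat.find_min hex (show j - 1 < j by omega)
      push_neg at hmin
      have h2 : β * (1/β : ℝ)^j = (1/β)^(j-1) := by
        rw [show j = (j-1)+1 by omega, pow_succ]
        field_simp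
        simp
      rw [h2]
      linarith
  have hbnd : ∀ i : ℕ, (1/β : ℝ)^(j+i) ≤ y₀ := fun i =>
    le_trans (pow_le_pow_of_le_one (le_of_lt hβinv0) (le_of_lt hβinv) (by omega)) hj
  have hyx : y₀ ≤ β ^ n * x₀ := tau_iter_le hβ0 hx₀.1 n
  have hmem : ∀ i : ℕ, x₀ - (y₀ - (1/β)^(j+i)) / β^n ∈ Set.Icc (0:ℝ) 1 := by
    intro i
    constructor
    · have h1 : (y₀ - (1/β)^(j+i)) / β^n ≤ y₀ / β^n := by
        apply div_le_div_of_nonneg_right ?_ (by positivity)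
        · linarith [pow_nonneg (le_of_lt hβinv0) (j+i)]
      have h2 : y₀ / β^n ≤ x₀ := by
        rw [div_le_iff₀ (by positivity)]
        calc y₀ ≤ β^n * x₀ := hyx
          _ = x₀ * β^n := by ring
      linarith
    · have h3 : 0 ≤ (y₀ - (1/β)^(j+i)) / β^n := div_nonneg (by linarith [hbnd i]) (by positivity)
      linarith [hx₀.2]
  have hFx : ∀ i : ℕ, Ffun β lam (x₀ - (y₀ - (1/β)^(j+i)) / β^n) - Ffun β lam x₀
      = (b^n)⁻¹ * ((b^(j+i))⁻¹ - Ffun β lam y₀) := by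
    intro i
    set t := y₀ - (1/β : ℝ)^(j+i) with htdef
    have ht0 : 0 ≤ t := by rw [htdef]; linarith [hbnd i]
    have ht : t ≤ (tau β)^[n] x₀ := by
      rw [htdef, ← hy₀def]
      linarith [pow_nonneg (le_of_lt hβinv0) (j+i)]
    have hiter : (tau β)^[n] (x₀ - t/β^n) = (1/β)^(j+i) := by
      rw [leftPert_iter hβ hx₀.1 n ht0 ht n le_rfl, ← hy₀def,
        mul_div_assoc, div_self (by positivity : (β:ℝ)^n ≠ 0), htdef]
      ring
    rw [F_diff hβ0.le hb (hmem i) hx₀ n (leftPert_dig hβ hx₀.1 n ht0 ht), hiter,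
      ← hy₀def, hFp (j+i)]
  set w := Ffun β lam y₀ with hwdef
  have htri : κ * (r^j)⁻¹ ≤ ‖(b^(j+0))⁻¹ - w‖ + ‖(b^(j+1))⁻¹ - w‖ := by
    have h1 : ((b^(j+0))⁻¹ - w) - ((b^(j+1))⁻¹ - w) = (b^j)⁻¹ * (1 - b⁻¹) := by
      rw [show j + 0 = j from rfl, pow_succ, mul_inv]
      ring
    calc κ * (r^j)⁻¹ = ‖(b^j)⁻¹ * (1 - b⁻¹)‖ := by
          rw [norm_mul, norm_inv, norm_pow, ← hrdef, ← hκdef]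
          ring
      _ = ‖((b^(j+0))⁻¹ - w) - ((b^(j+1))⁻¹ - w)‖ := by rw [h1]
      _ ≤ _ := norm_sub_le _ _
  have hpick : ∃ i : ℕ, κ/2 * (r^j)⁻¹ ≤ ‖(b^(j+i))⁻¹ - w‖ := by
    rcases le_total ‖(b^(j+0))⁻¹ - w‖ ‖(b^(j+1))⁻¹ - w‖ with h | h
    · exact ⟨1, by nlinarith⟩
    · exact ⟨0, by nlinarith⟩
  obtain ⟨i, hi⟩ := hpick
  set x := x₀ - (y₀ - (1/β)^(j+i)) / β^n with hxdef
  have habs : |x - x₀| = (y₀ - (1/β)^(j+i)) / β^n := by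
    rw [hxdef, show x₀ - (y₀ - (1/β : ℝ)^(j+i)) / β^n - x₀ = -((y₀ - (1/β)^(j+i)) / β^n) by ring,
      abs_neg, abs_of_nonneg (div_nonneg (by linarith [hbnd i]) (by positivity))]
  have hxd : |x - x₀| ≤ β * (β^(n+j))⁻¹ := by
    rw [habs]
    have h1 : (y₀ - (1/β : ℝ)^(j+i)) / β^n ≤ (β * (1/β)^j) / β^n := by
      apply div_le_div_of_nonneg_right ?_ (by positivity)
      · linarith [pow_nonneg (le_of_lt hβinv0) (j+i)]
    have h2 : (β * (1/β : ℝ)^j) / β^n = β * (β^(n+j))⁻¹ := by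
      rw [one_div, inv_pow, pow_add]
      field_simp
    linarith
  have hxδ : |x - x₀| < δ := by
    rw [habs]
    have h1 : (y₀ - (1/β : ℝ)^(j+i)) / β^n ≤ 1 / β^n := by
      apply div_le_div_of_nonneg_right ?_ (by positivity)
      · linarith [pow_nonneg (le_of_lt hβinv0) (j+i)]
    have h2 : (1 : ℝ) / β^n = (1/β)^n := by rw [div_pow, one_pow]
    rw [h2] at h1
    linarith
  have hHL := HL x (hmem i) hxδ
  have hlow : κ/2 * (r^(n+j))⁻¹ ≤ ‖Ffun β lam x - Ffun β lam x₀‖ := by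
    rw [hxdef, hFx i, norm_mul, norm_inv, norm_pow, ← hrdef]
    calc κ/2 * (r^(n+j))⁻¹ = (r^n)⁻¹ * (κ/2 * (r^j)⁻¹) := by
          rw [pow_add, mul_inv]
          ring
      _ ≤ (r^n)⁻¹ * ‖(b^(j+i))⁻¹ - w‖ := by
          apply mul_le_mul_of_nonneg_left hi (by positivity)
  have hfin : κ/2 * (r^(n+j))⁻¹ ≤ (C * β) * (β^(n+j))⁻¹ := by
    calc κ/2 * (r^(n+j))⁻¹ ≤ C * |x - x₀| := le_trans hlow hHL
      _ ≤ C * (β * (β^(n+j))⁻¹) := mul_le_mul_of_nonneg_left hxd hC.le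
      _ = (C * β) * (β^(n+j))⁻¹ := by ring
  exact ⟨n + j, le_trans (le_max_left N n₁) (Nat.le_add_right n j), key_arith hβ0 hr0 hfin⟩

lemma caseB0 {β : ℝ} {lam : ℂ} (hβ : 1 < β) (hb : 1 < ‖(β:ℂ)*lam‖) (hlt : ‖(β:ℂ)*lam‖ < β)
    {C δ : ℝ} (hC : 0 < C) (hδ : 0 < δ)
    (HL : ∀ x ∈ Set.Icc (0:ℝ) 1, |x - (0:ℝ)| < δ →
      ‖Ffun β lam x - Ffun β lam 0‖ ≤ C * |x - (0:ℝ)|) : False := by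
  set b := (β:ℂ) * lam with hbdef
  set r := ‖b‖ with hrdef
  have hβ0 : (0:ℝ) < β := by linarith
  have hr0 : (0:ℝ) < r := by rw [hrdef]; linarith
  have hβinv : (1/β : ℝ) < 1 := by rw [div_lt_one hβ0]; exact hβ
  have hβinv0 : (0:ℝ) < 1/β := by positivity
  have hρ : 1 < β / r := by rw [lt_div_iff₀ hr0]; linarith
  refine no_big hρ one_pos (C := C) (fun N => ?_)
  obtain ⟨m₁, hm₁⟩ := exists_pow_lt_of_lt_one hδ hβinv
  set m := max (max N 1) m₁ with hmdef
  have hm1 : 1 ≤ m := le_trans (le_max_right N 1) (le_max_left _ _)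
  have hδm : (1/β : ℝ)^m < δ :=
    lt_of_le_of_lt (pow_le_pow_of_le_one (le_of_lt hβinv0) (le_of_lt hβinv) (le_max_right _ _)) hm₁
  have hxm : ((1/β : ℝ)^m) ∈ Set.Icc (0:ℝ) 1 :=
    ⟨by positivity, pow_le_one₀ (le_of_lt hβinv0) (le_of_lt hβinv)⟩
  have habs : |(1/β : ℝ)^m - 0| = (1/β : ℝ)^m := by
    rw [sub_zero, abs_of_nonneg (by positivity)]
  have hHL := HL _ hxm (by rw [habs]; exact hδm)
  rw [F_pow β lam hβ hb m hm1, F_zero, sub_zero, habs] at hHL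
  have hnorm : ‖(b^m)⁻¹‖ = (r^m)⁻¹ := by
    rw [norm_inv, norm_pow, ← hrdef]
  rw [hnorm] at hHL
  have hfin : (1:ℝ) * (r^m)⁻¹ ≤ C * (β^m)⁻¹ := by
    rw [one_mul]
    calc (r^m)⁻¹ ≤ C * (1/β)^m := hHL
      _ = C * (β^m)⁻¹ := by rw [one_div, inv_pow]
  exact ⟨m, le_trans (le_max_left N 1) (le_max_left _ _), key_arith hβ0 hr0 hfin⟩

lemma exists_eps {β : ℝ} (hβ : 1 < β) (x₀ : ℝ) (n : ℕ) :
    ∃ ε : ℝ, 0 < ε ∧ ∀ η : ℝ, 0 ≤ η → η < ε →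
      ∀ m, 1 ≤ m → m ≤ n → (tau β)^[m] x₀ + β^m * η < 1 := by
  induction n with
  | zero => exact ⟨1, one_pos, fun η _ _ m hm1 hm2 => by omega⟩
  | succ n ih =>
    obtain ⟨ε, hε, hend⟩ := ih
    have hlt1 : (tau β)^[n+1] x₀ < 1 := by
      rw [Function.iterate_succ_apply']
      exact tau_lt_one _ _
    have hβp : (0:ℝ) < β^(n+1) := pow_pos (by linarith) _
    refine ⟨min ε ((1 - (tau β)^[n+1] x₀)/β^(n+1)), lt_min hε (div_pos (by linarith) hβp), ?_⟩
    intro η hη0 hη m hm1 hm2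
    rcases Nat.lt_or_ge m (n+1) with h | h
    · exact hend η hη0 (lt_of_lt_of_le hη (min_le_left _ _)) m hm1 (by omega)
    · have hm : m = n + 1 := by omega
      subst hm
      have h2 : η < (1 - (tau β)^[n+1] x₀)/β^(n+1) := lt_of_lt_of_le hη (min_le_right _ _)
      rw [div_eq_mul_inv] at h2
      have := (lt_div_iff₀ hβp).1 (by rw [div_eq_mul_inv]; exact h2)
      linarith [(mul_comm (β^(n+1)) η) ▸ this]

lemma caseB1 {β : ℝ} {lam : ℂ} (hβ : 1 < β) (hb : 1 < ‖(β:ℂ)*lam‖) (hlt : ‖(β:ℂ)*lam‖ < β)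
    {x₀ : ℝ} (hx₀ : x₀ ∈ Set.Icc (0:ℝ) 1) (hx₀1 : x₀ < 1)
    {n₀ : ℕ} (hzero : (tau β)^[n₀] x₀ = 0)
    {C δ : ℝ} (hC : 0 < C) (hδ : 0 < δ)
    (HL : ∀ x ∈ Set.Icc (0:ℝ) 1, |x - x₀| < δ →
      ‖Ffun β lam x - Ffun β lam x₀‖ ≤ C * |x - x₀|) : False := by
  set b := (β:ℂ) * lam with hbdef
  set r := ‖b‖ with hrdef
  have hβ0 : (0:ℝ) < β := by linarith
  have hr0 : (0:ℝ) < r := by rw [hrdef]; linarith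
  have hβinv : (1/β : ℝ) < 1 := by rw [div_lt_one hβ0]; exact hβ
  have hβinv0 : (0:ℝ) < 1/β := by positivity
  have hρ : 1 < β / r := by rw [lt_div_iff₀ hr0]; linarith
  obtain ⟨ε, hε, heps⟩ := exists_eps hβ x₀ n₀
  have hmin : (0:ℝ) < min ε (min (1 - x₀) δ) := by
    apply lt_min hε (lt_min (by linarith) hδ)
  refine no_big hρ one_pos (C := C) (fun N => ?_)
  obtain ⟨m₂, hm₂⟩ := exists_pow_lt_of_lt_one hmin hβinv
  set m := max (max N 1) m₂ with hmdef
  have hm1 : 1 ≤ m := le_trans (le_max_right N 1) (le_max_left _ _)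
  set η := (1/β : ℝ)^(n₀ + m) with hηdef
  have hη0 : 0 < η := by positivity
  have hηsmall : η < min ε (min (1 - x₀) δ) := by
    calc η ≤ (1/β : ℝ)^m :=
        pow_le_pow_of_le_one (le_of_lt hβinv0) (le_of_lt hβinv) (by omega)
      _ ≤ (1/β)^m₂ :=
        pow_le_pow_of_le_one (le_of_lt hβinv0) (le_of_lt hβinv) (le_max_right _ _)
      _ < _ := hm₂
  have hηε : η < ε := lt_of_lt_of_le hηsmall (min_le_left _ _)
  have hη1 : η < 1 - x₀ := lt_of_lt_of_le hηsmall (le_trans (min_le_right _ _) (min_le_left _ _))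
  have hηδ : η < δ := lt_of_lt_of_le hηsmall (le_trans (min_le_right _ _) (min_le_right _ _))
  have hc := fun m' h1 h2 => heps η hη0.le hηε m' h1 h2
  set x := x₀ + η with hxdef
  have hxm : x ∈ Set.Icc (0:ℝ) 1 := ⟨by linarith [hx₀.1], by linarith⟩
  have habs : |x - x₀| = η := by
    rw [hxdef, show x₀ + η - x₀ = η by ring, abs_of_nonneg hη0.le]
  have hiter : (tau β)^[n₀] x = (1/β)^m := by
    rw [hxdef, rightPert_iter hβ hη0.le n₀ hc n₀ le_rfl, hzero, zero_add, hηdef]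
    rw [pow_add]
    rw [show β^n₀ * ((1/β : ℝ)^n₀ * (1/β)^m) = (β * (1/β))^n₀ * (1/β)^m by
      rw [mul_pow]; ring]
    rw [mul_one_div, div_self (ne_of_gt hβ0), one_pow, one_mul]
  have hdiff : Ffun β lam x - Ffun β lam x₀ = (b^(n₀+m))⁻¹ := by
    rw [F_diff hβ0.le hb hxm hx₀ n₀ (by
      intro k hk
      rw [hxdef]
      exact rightPert_dig hβ hη0.le n₀ hc k hk), hiter, hzero, F_zero,
      F_pow β lam hβ hb m hm1, sub_zero, pow_add, mul_inv]
  have hHL := HL x hxm (by rw [habs]; exact hηδ)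
  rw [hdiff, habs] at hHL
  have hnorm : ‖(b^(n₀+m))⁻¹‖ = (r^(n₀+m))⁻¹ := by
    rw [norm_inv, norm_pow, ← hrdef]
  rw [hnorm] at hHL
  have hfin : (1:ℝ) * (r^(n₀+m))⁻¹ ≤ C * (β^(n₀+m))⁻¹ := by
    rw [one_mul]
    calc (r^(n₀+m))⁻¹ ≤ C * η := hHL
      _ = C * (β^(n₀+m))⁻¹ := by rw [hηdef, one_div, inv_pow]
  exact ⟨n₀ + m, le_trans (le_trans (le_max_left N 1) (le_max_left _ _)) (Nat.le_add_left m n₀),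
    key_arith hβ0 hr0 hfin⟩

lemma caseB2 {β : ℝ} {lam : ℂ} (hβ : 1 < β) (hb : 1 < ‖(β:ℂ)*lam‖) (hlt : ‖(β:ℂ)*lam‖ < β)
    (F1 : Ffun β lam 1 = 1)
    {n₀ : ℕ} (hn₀ : 1 ≤ n₀) (hzero : (tau β)^[n₀] (1:ℝ) = 0)
    (hmin : (tau β)^[n₀-1] (1:ℝ) ≠ 0)
    {C δ : ℝ} (hC : 0 < C) (hδ : 0 < δ)
    (HL : ∀ x ∈ Set.Icc (0:ℝ) 1, |x - (1:ℝ)| < δ →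
      ‖Ffun β lam x - Ffun β lam 1‖ ≤ C * |x - (1:ℝ)|) : False := by
  set b := (β:ℂ) * lam with hbdef
  set r := ‖b‖ with hrdef
  have hβ0 : (0:ℝ) < β := by linarith
  have hr0 : (0:ℝ) < r := by rw [hrdef]; linarith
  have hb0 : b ≠ 0 := by
    intro h
    have : r = 0 := by rw [hrdef, h, norm_zero]
    linarith
  have hβinv : (1/β : ℝ) < 1 := by rw [div_lt_one hβ0]; exact hβ
  have hβinv0 : (0:ℝ) < 1/β := by positivity
  have hρ : 1 < β / r := by rw [lt_div_iff₀ hr0]; linarith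
  have h1mem : (1:ℝ) ∈ Set.Icc (0:ℝ) 1 := ⟨zero_le_one, le_rfl⟩
  -- the endpoint y₀ = a/β
  set y₀ := (tau β)^[n₀-1] (1:ℝ) with hy₀def
  have hy₀mem := iter_mem β h1mem (n₀-1)
  have hy₀pos : 0 < y₀ := lt_of_le_of_ne hy₀mem.1 (Ne.symm hmin)
  have hy₀le : y₀ ≤ 1 := hy₀mem.2
  set a : ℤ := ⌊β * y₀⌋ with hadef
  have hstep : tau β y₀ = 0 := by
    have h3 : (tau β)^[n₀] (1:ℝ) = tau β y₀ := by
      conv_lhs => rw [show n₀ = (n₀ - 1) + 1 by omega]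
      rw [Function.iterate_succ_apply', hy₀def]
    rw [← h3, hzero]
  have ha : β * y₀ = (a:ℝ) := by
    have := hstep
    simp only [tau] at this
    rw [← hadef] at this
    linarith
  have ha1 : 1 ≤ a := by
    have h2 : (0:ℝ) < (a:ℝ) := by rw [← ha]; positivity
    have h3 : (0:ℤ) < a := by exact_mod_cast h2
    omega
  have ha2 : (a:ℝ) ≤ β := by
    rw [← ha]
    nlinarith
  have hy₀eq : y₀ = (a:ℝ)/β := by
    rw [← ha]
    field_simp
  -- star identity
  have star : ∀ u : ℝ, 0 < u → u ≤ 1 →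
      Ffun β lam (1 - (1/β)^n₀ * u) - 1 = (b^n₀)⁻¹ * (Ffun β lam (1-u) - 1) := by
    intro u hu0 hu1
    set t := u/β with htdef
    have ht0 : 0 ≤ t := by positivity
    have htβ : t ≤ 1/β := by
      rw [htdef]
      apply div_le_div_of_nonneg_right hu1 hβ0.le
    have hty₀ : t ≤ y₀ := by
      rw [hy₀eq]
      calc t ≤ 1/β := htβ
        _ ≤ (a:ℝ)/β := by
          apply div_le_div_of_nonneg_right ?_ hβ0.le
          exact_mod_cast ha1
    have ht' : t ≤ (tau β)^[n₀-1] (1:ℝ) := by rw [← hy₀def]; exact hty₀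
    set x := 1 - t/β^(n₀-1) with hxdef
    have hxeq : x = 1 - (1/β)^n₀ * u := by
      rw [hxdef, htdef]
      congr 1
      rw [div_div]
      rw [show β * β^(n₀-1) = β^n₀ by rw [← pow_succ']; congr 1; omega]
      rw [one_div, inv_pow, div_eq_mul_inv, mul_comm]
    have hpow1 : (1/β : ℝ)^n₀ * u ≤ 1 := by
      have h1 : (1/β : ℝ)^n₀ ≤ 1 := pow_le_one₀ (le_of_lt hβinv0) (le_of_lt hβinv)
      nlinarith [pow_nonneg (le_of_lt hβinv0) n₀]
    have hxmem : x ∈ Set.Icc (0:ℝ) 1 := by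
      rw [hxeq]
      constructor
      · linarith
      · have : 0 ≤ (1/β : ℝ)^n₀ * u := by positivity
        linarith
    have hiter : (tau β)^[n₀-1] x = y₀ - t := by
      rw [hxdef, leftPert_iter hβ zero_le_one (n₀-1) ht0 ht' (n₀-1) le_rfl, ← hy₀def,
        mul_div_assoc, div_self (by positivity : (β:ℝ)^(n₀-1) ≠ 0), mul_one]
    -- value at y₀ - t
    have hytmem : y₀ - t ∈ Set.Icc (0:ℝ) 1 := ⟨by linarith, by linarith⟩
    have hbyt : β * (y₀ - t) = (a:ℝ) - u := by
      rw [mul_sub, ha, htdef]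
      congr 1
      field_simp
    have hdt : dig β (y₀ - t) 1 = a - 1 := by
      unfold dig
      simp only [Nat.sub_self, Function.iterate_zero, id]
      rw [hbyt]
      rw [Int.floor_eq_iff]
      constructor
      · push_cast; linarith
      · push_cast; linarith
    have htt : tau β (y₀ - t) = 1 - u := by
      simp only [tau]
      have : ⌊β * (y₀ - t)⌋ = a - 1 := by
        have := hdt
        unfold dig at this
        simpa using this
      rw [this, hbyt]
      push_cast
      ring
    have hFyt : Ffun β lam (y₀ - t) = (((a:ℂ) - 1) + Ffun β lam (1-u)) / b := by
      rw [F_step hβ0.le hb hytmem, hdt, htt, ← hbdef]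
      push_cast
      ring_nf
    have hFy₀ : Ffun β lam y₀ = (a:ℂ)/b := by
      rw [hy₀eq]
      exact F_frac β lam hβ hb a ha1 ha2
    -- assemble
    have hdig := leftPert_dig hβ zero_le_one (n₀-1) ht0 ht'
    have hdiff := F_diff hβ0.le hb (hxdef ▸ hxmem) h1mem (n₀-1) (by
      intro k hk
      rw [hxdef] at *
      exact hdig k hk)
    rw [hiter, ← hy₀def, hFyt, hFy₀] at hdiff
    have hbn : b^n₀ = b^(n₀-1) * b := by
      rw [← pow_succ]
      congr 1
      omega
    have hgoal : Ffun β lam x - Ffun β lam 1 = (b^n₀)⁻¹ * (Ffun β lam (1-u) - 1) := by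
      rw [hdiff, ← hbdef, hbn, mul_inv]
      field_simp
      ring
    rw [← hxeq, ← hgoal, F1]
  -- iterate star
  have hsmall : (0:ℝ) < (1/β)^n₀ ∧ (1/β : ℝ)^n₀ ≤ 1 :=
    ⟨by positivity, pow_le_one₀ (le_of_lt hβinv0) (le_of_lt hβinv)⟩
  have hstark : ∀ k : ℕ, Ffun β lam (1 - ((1/β)^n₀)^(k+1)) - 1 = ((b^n₀)^(k+1))⁻¹ * (-1) := by
    intro k
    induction k with
    | zero =>
      have h0 := star 1 one_pos le_rfl
      rw [mul_one] at h0
      rw [pow_one, pow_one, h0]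
      rw [show (1:ℝ) - 1 = 0 by ring, F_zero]
      ring
    | succ k ih =>
      have hu0 : (0:ℝ) < ((1/β)^n₀)^(k+1) := by positivity
      have hu1 : ((1/β : ℝ)^n₀)^(k+1) ≤ 1 := pow_le_one₀ hsmall.1.le hsmall.2
      have h1 := star _ hu0 hu1
      rw [show (1/β : ℝ)^n₀ * ((1/β)^n₀)^(k+1) = ((1/β)^n₀)^(k+1+1) by rw [pow_succ]; ring] at h1
      rw [h1, ih]
      rw [pow_succ, mul_inv]
      ring
  -- conclude
  refine no_big hρ one_pos (C := C) (fun N => ?_)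
  have hsp : (0:ℝ) < (1/β)^n₀ := hsmall.1
  have hbase : ((1:ℝ)/β)^n₀ < 1 := pow_lt_one₀ (le_of_lt hβinv0) hβinv (by omega)
  obtain ⟨k₁, hk₁⟩ := exists_pow_lt_of_lt_one hδ hbase
  set k := max N k₁ with hkdef
  set s := (((1:ℝ)/β)^n₀)^(k+1) with hsdef
  have hs0 : 0 < s := by positivity
  have hs1 : s ≤ 1 := pow_le_one₀ hsp.le hsmall.2
  have hsδ : s < δ := by
    calc s ≤ ((1/β : ℝ)^n₀)^k₁ :=
        pow_le_pow_of_le_one hsp.le hsmall.2 (le_trans (le_max_right N k₁) (by omega))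
      _ < δ := hk₁
  have hxm : (1 - s) ∈ Set.Icc (0:ℝ) 1 := ⟨by linarith, by linarith⟩
  have habs : |(1 - s) - 1| = s := by
    rw [show (1 - s) - 1 = -s by ring, abs_neg, abs_of_nonneg hs0.le]
  have hHL := HL (1 - s) hxm (by rw [habs]; exact hsδ)
  have hdiffval : Ffun β lam (1 - s) - Ffun β lam 1 = ((b^n₀)^(k+1))⁻¹ * (-1) := by
    rw [F1, hsdef]
    exact hstark k
  rw [hdiffval, habs] at hHL
  have hnorm : ‖((b^n₀)^(k+1))⁻¹ * (-1)‖ = ((r^n₀)^(k+1))⁻¹ := by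
    rw [norm_mul, norm_neg, norm_one, mul_one, norm_inv,
      norm_pow, norm_pow, ← hrdef]
  rw [hnorm] at hHL
  have hseq : s = ((β^n₀ : ℝ)^(k+1))⁻¹ := by
    rw [hsdef, one_div, inv_pow, inv_pow]
  have hfin : (1:ℝ) * ((r^n₀)^(k+1))⁻¹ ≤ C * ((β^n₀)^(k+1))⁻¹ := by
    rw [one_mul, ← hseq]
    exact hHL
  have hka := key_arith (pow_pos hβ0 n₀) (pow_pos hr0 n₀) hfin
  refine ⟨n₀ * (k+1), ?_, ?_⟩
  · calc N ≤ k := le_max_left N k₁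
      _ ≤ k + 1 := by omega
      _ ≤ n₀ * (k+1) := Nat.le_mul_of_pos_left (k+1) (by omega)
  · rw [pow_mul, div_pow]
    exact hka

theorem stmt17 (β : ℝ) (hβ : 1 < β) (lam : ℂ)
    (h1 : 1 / β < ‖lam‖) (h2 : ‖lam‖ < 1)
    (hev : (∑' n : ℕ, (dig β 1 (n + 1) : ℂ) / ((β : ℂ) * lam) ^ (n + 1)) = 1) :
    (∀ x₀ ∈ Set.Icc (0 : ℝ) 1, ¬ ∃ C > (0 : ℝ), ∃ δ > (0 : ℝ), ∀ x ∈ Set.Icc (0 : ℝ) 1,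
      |x - x₀| < δ → ‖Ffun β lam x - Ffun β lam x₀‖ ≤ C * |x - x₀|) ∧
    (∀ x₀ ∈ Set.Icc (0 : ℝ) 1,
      ¬ DifferentiableWithinAt ℝ (Ffun β lam) (Set.Icc (0 : ℝ) 1) x₀) := by
  have hβ0 : (0:ℝ) < β := by linarith
  have hnorm : ‖(β : ℂ) * lam‖ = β * ‖lam‖ := by
    rw [norm_mul, Complex.norm_real, Real.norm_eq_abs, abs_of_pos hβ0]
  have hb : 1 < ‖(β : ℂ) * lam‖ := by
    rw [hnorm]
    rw [div_lt_iff₀ hβ0] at h1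
    linarith [h1]
  have hlt : ‖(β : ℂ) * lam‖ < β := by
    rw [hnorm]
    nlinarith [norm_nonneg lam]
  have F1 : Ffun β lam 1 = 1 := hev
  have part1 : ∀ x₀ ∈ Set.Icc (0 : ℝ) 1, ¬ ∃ C > (0 : ℝ), ∃ δ > (0 : ℝ),
      ∀ x ∈ Set.Icc (0 : ℝ) 1, |x - x₀| < δ →
      ‖Ffun β lam x - Ffun β lam x₀‖ ≤ C * |x - x₀| := by
    rintro x₀ hx₀ ⟨C, hC, δ, hδ, HL⟩
    by_cases hz : ∃ n : ℕ, (tau β)^[n] x₀ = 0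
    · have hzero := Nat.find_spec hz
      set n₀ := Nat.find hz with hn₀def
      rcases Nat.eq_zero_or_pos n₀ with h0 | h0
      · rw [h0] at hzero
        simp only [Function.iterate_zero, id] at hzero
        subst hzero
        exact caseB0 hβ hb hlt hC hδ HL
      · rcases eq_or_lt_of_le hx₀.2 with h1' | h1'
        · subst h1'
          exact caseB2 hβ hb hlt F1 h0 hzero
            (Nat.find_min hz (show n₀ - 1 < n₀ by omega)) hC hδ HL
        · exact caseB1 hβ hb hlt hx₀ h1' hzero hC hδ HL
    · push_neg at hz
      exact caseA hβ hb hlt F1 hx₀ hz hC hδ HL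
  refine ⟨part1, ?_⟩
  intro x₀ hx₀ hdiff
  have h := hdiff.hasFDerivWithinAt
  have hO := h.isBigO_sub
  rw [Asymptotics.isBigO_iff] at hO
  obtain ⟨c, hc⟩ := hO
  rw [eventually_nhdsWithin_iff, Metric.eventually_nhds_iff] at hc
  obtain ⟨ε, hε, hball⟩ := hc
  apply part1 x₀ hx₀
  refine ⟨max c 1, lt_of_lt_of_le zero_lt_one (le_max_right c 1), ε, hε, ?_⟩
  intro x hx hxd
  have hd : dist x x₀ < ε := by rwa [Real.dist_eq]
  have hbd := hball hd hx
  simp only [Real.norm_eq_abs] at hbd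
  calc ‖Ffun β lam x - Ffun β lam x₀‖
      = ‖Ffun β lam x - Ffun β lam x₀‖ := rfl
    _ ≤ c * |x - x₀| := hbd
    _ ≤ max c 1 * |x - x₀| := mul_le_mul_of_nonneg_right (le_max_left c 1) (abs_nonneg _)
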